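/- Let L be a type of labels, let X = (V, E, s, t) be a finite L-labeled bipointed digraph whose underlying undirected graph is a tree, and assume X has no parallel edges, i.e. for all u, v ∈ V there is at most one pair (a, d) with a ∈ L and d a direction such that X has an edge between u and v labelled a in direction d. Let Y = (W, F, s', t') be any finite L-labeled bipointed digraph. Then there exists a morphism from X to Y if and only if there exists a family B : V → Set W such that: (a) B v is nonempty for every v ∈ V; (b) B s ⊆ {s'} and B t ⊆ {t'}; and (c) for every u, v ∈ V and a ∈ L with E u v a, every x ∈ B u admits y ∈ B v with F x y a, and every y ∈ B v admits x ∈ B u with F x y a. -/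

import Mathlib

/-- A morphism of `L`-labeled bipointed digraphs `(V, E, s, t) → (W, F, s', t')`:
a map on vertices preserving the start vertex, the end vertex, and labeled edges. -/
def IsLBDMorphism {L V W : Type*} (E : V → V → L → Prop) (s t : V)
    (F : W → W → L → Prop) (s' t' : W) (f : V → W) : Prop :=
  f s = s' ∧ f t = t' ∧ ∀ u v a, E u v a → F (f u) (f v) a

/-- `X` has an edge between `u` and `v` labelled `a` in direction `d`: for `d = true`
the edge points from `u` to `v`, for `d = false` it points from `v` to `u`. -/
def HasEdgeDir {L V : Type*} (E : V → V → L → Prop) (u v : V) (a : L) (d : Bool) : Prop :=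
  if d then E u v a else E v u a

/-- The underlying undirected simple graph of an `L`-labeled digraph: `u` is adjacent to
`v` iff `u ≠ v` and some labeled edge joins them (in either direction). -/
def underlyingGraph {L V : Type*} (E : V → V → L → Prop) : SimpleGraph V where
  Adj u v := u ≠ v ∧ ∃ a, E u v a ∨ E v u a
  symm := by
    constructor
    rintro u v ⟨hne, a, ha⟩
    exact ⟨hne.symm, a, ha.symm⟩
  loopless := by
    constructor
    rintro v ⟨hne, -⟩
    exact hne rfl

/-- Auxiliary: propagate a candidate element along a walk towards the root `s`. -/
noncomputable def valAux {L V W : Type*} {E : V → V → L → Prop} {F : W → W → L → Prop}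
    {B : V → Set W} {s : V} {s' : W}
    (hB : ∀ u v, (underlyingGraph E).Adj u v → ∀ x ∈ B u,
      ∃ y ∈ B v, ∀ a, (E u v a → F x y a) ∧ (E v u a → F y x a))
    (hs : s' ∈ B s) :
    {v : V} → (underlyingGraph E).Walk v s → {y : W // y ∈ B v}
  | _, .nil => ⟨s', hs⟩
  | _, .cons h p =>
    let x := valAux hB hs p
    ⟨(hB _ _ h.symm x.1 x.2).choose, (hB _ _ h.symm x.1 x.2).choose_spec.1⟩

theorem valAux_cons_spec {L V W : Type*} {E : V → V → L → Prop} {F : W → W → L → Prop}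
    {B : V → Set W} {s : V} {s' : W}
    (hB : ∀ u v, (underlyingGraph E).Adj u v → ∀ x ∈ B u,
      ∃ y ∈ B v, ∀ a, (E u v a → F x y a) ∧ (E v u a → F y x a))
    (hs : s' ∈ B s) {u v : V} (h : (underlyingGraph E).Adj v u)
    (p : (underlyingGraph E).Walk u s) :
    ∀ a, (E u v a → F (valAux hB hs p).1 (valAux hB hs (.cons h p)).1 a) ∧
         (E v u a → F (valAux hB hs (.cons h p)).1 (valAux hB hs p).1 a) := by
  have := (hB _ _ h.symm (valAux hB hs p).1 (valAux hB hs p).2).choose_spec.2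
  simpa only [valAux] using this

theorem morphism_iff_arc_consistent_family
    {L V W : Type*} [Finite V] [Finite W]
    (E : V → V → L → Prop) (s t : V) (F : W → W → L → Prop) (s' t' : W)
    (htree : (underlyingGraph E).IsTree)
    (hpar : ∀ (u v : V) (a₁ a₂ : L) (d₁ d₂ : Bool),
      HasEdgeDir E u v a₁ d₁ → HasEdgeDir E u v a₂ d₂ → a₁ = a₂ ∧ d₁ = d₂) :
    (∃ f : V → W, IsLBDMorphism E s t F s' t' f) ↔
      ∃ B : V → Set W,
        (∀ v, (B v).Nonempty) ∧
        B s ⊆ {s'} ∧ B t ⊆ {t'} ∧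
        ∀ (u v : V) (a : L), E u v a →
          (∀ x ∈ B u, ∃ y ∈ B v, F x y a) ∧
          (∀ y ∈ B v, ∃ x ∈ B u, F x y a) := by
  constructor
  · rintro ⟨f, hfs, hft, hf⟩
    refine ⟨fun v => {f v}, fun v => ⟨f v, rfl⟩, by simp [hfs], by simp [hft], ?_⟩
    rintro u v a h
    constructor
    · rintro x rfl; exact ⟨f v, rfl, hf u v a h⟩
    · rintro y rfl; exact ⟨f u, rfl, hf u v a h⟩
  · rintro ⟨B, hne, hBs, hBt, hcons⟩
    classical
    -- no loops
    have hloop : ∀ v a, ¬ E v v a := by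
      intro v a h
      have := (hpar v v a a true false (by simpa [HasEdgeDir] using h)
        (by simpa [HasEdgeDir] using h)).2
      simp at this
    -- consistency along adjacencies, both directions at once
    have hB : ∀ u v, (underlyingGraph E).Adj u v → ∀ x ∈ B u,
        ∃ y ∈ B v, ∀ a, (E u v a → F x y a) ∧ (E v u a → F y x a) := by
      rintro u v ⟨hneq, a₀, h₀⟩ x hx
      rcases h₀ with h₀ | h₀
      · obtain ⟨y, hy, hF⟩ := (hcons u v a₀ h₀).1 x hx
        refine ⟨y, hy, fun a => ⟨fun ha => ?_, fun ha => ?_⟩⟩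
        · obtain ⟨rfl, -⟩ := hpar u v a a₀ true true
            (by simpa [HasEdgeDir] using ha) (by simpa [HasEdgeDir] using h₀)
          exact hF
        · exact absurd (hpar u v a₀ a true false
            (by simpa [HasEdgeDir] using h₀) (by simpa [HasEdgeDir] using ha)).2 (by simp)
      · obtain ⟨y, hy, hF⟩ := (hcons v u a₀ h₀).2 x hx
        refine ⟨y, hy, fun a => ⟨fun ha => ?_, fun ha => ?_⟩⟩
        · exact absurd (hpar u v a₀ a false true
            (by simpa [HasEdgeDir] using h₀) (by simpa [HasEdgeDir] using ha)).2 (by simp)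
        · obtain ⟨rfl, -⟩ := hpar u v a a₀ false false
            (by simpa [HasEdgeDir] using ha) (by simpa [HasEdgeDir] using h₀)
          exact hF
    have hs' : s' ∈ B s := by
      obtain ⟨x, hx⟩ := hne s
      have := hBs hx; simp at this; subst this; exact hx
    -- canonical paths
    have hconn := htree.isConnected
    let P : ∀ v, (underlyingGraph E).Walk v s := fun v =>
      (htree.existsUnique_path v s).choose
    have hP : ∀ v, (P v).IsPath := fun v => (htree.existsUnique_path v s).choose_spec.1
    have hPu : ∀ v (q : (underlyingGraph E).Walk v s), q.IsPath → q = P v :=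
      fun v q hq => (htree.existsUnique_path v s).choose_spec.2 q hq
    set f : V → W := fun v => (valAux hB hs' (P v)).1 with hf
    have hfmem : ∀ v, f v ∈ B v := fun v => (valAux hB hs' (P v)).2
    -- adjacency and path extension
    have key : ∀ u v (h : (underlyingGraph E).Adj u v),
        (∃ h' : (underlyingGraph E).Adj v u, P v = .cons h' (P u)) ∨
        (∃ h' : (underlyingGraph E).Adj u v, P u = .cons h' (P v)) := by
      intro u v h
      by_cases hv : v ∈ (P u).support
      · right
        have hq : ((P u).dropUntil v hv).IsPath := (hP u).dropUntil hv
        have hPv : (P u).dropUntil v hv = P v := hPu v _ hq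
        refine ⟨h, ?_⟩
        have hu : u ∉ ((P u).dropUntil v hv).support := by
          intro hu
          have hnd := (hP u).support_nodup
          rw [← SimpleGraph.Walk.take_spec (P u) hv, SimpleGraph.Walk.support_append] at hnd
          have h1 : u ∈ ((P u).takeUntil v hv).support :=
            SimpleGraph.Walk.start_mem_support _
          have h2 : u ∈ ((P u).dropUntil v hv).support.tail := by
            rw [SimpleGraph.Walk.support_eq_cons ((P u).dropUntil v hv)] at hu
            rcases List.mem_cons.mp hu with h' | h'
            · exact absurd h' h.ne
            · exact h'
          exact (List.disjoint_of_nodup_append hnd) h1 h2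
        have : (SimpleGraph.Walk.cons h ((P u).dropUntil v hv)).IsPath := hq.cons hu
        rw [← hPv]
        exact (hPu u _ this).symm
      · left
        refine ⟨h.symm, ?_⟩
        exact (hPu v _ ((hP u).cons hv)).symm
    refine ⟨f, ?_, ?_, ?_⟩
    · have : P s = SimpleGraph.Walk.nil := (hPu s _ SimpleGraph.Walk.IsPath.nil).symm
      show (valAux hB hs' (P s)).1 = s'
      rw [this]; simp [valAux]
    · have := hBt (hfmem t)
      simpa using this
    · intro u v a hEa
      have hneq : u ≠ v := by rintro rfl; exact hloop u a hEa
      have hadj : (underlyingGraph E).Adj u v := ⟨hneq, a, Or.inl hEa⟩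
      rcases key u v hadj with ⟨h', hPv⟩ | ⟨h', hPu'⟩
      · show F (valAux hB hs' (P u)).1 (valAux hB hs' (P v)).1 a
        rw [hPv]
        exact (valAux_cons_spec hB hs' h' (P u) a).1 hEa
      · show F (valAux hB hs' (P u)).1 (valAux hB hs' (P v)).1 a
        rw [hPu']
        exact (valAux_cons_spec hB hs' h' (P v) a).2 hEa
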